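/- Let n ≥ 2 with unique decomposition n = a·f_t + b·f_{t-1}, 1 ≤ a ≤ b ≤ f_t, t ≥ 2. Then n has exactly two n-good pairs if and only if a > f_{t-1}; in that case the two n-good pairs are (b, a) and (b + f_t, a − f_{t-1}). -/
import Mathlib


def reaches (n : ℤ) (s : ℕ) : Prop :=
  ∃ a b : ℤ, 1 ≤ a ∧ 1 ≤ b ∧ n = a * (Nat.fib (s - 1) : ℤ) + b * (Nat.fib (s - 2) : ℤ)

def isSlow (n : ℤ) (s : ℕ) : Prop :=
  reaches n s ∧ ∀ s', reaches n s' → s' ≤ s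

/-- `(b, a)` is an `n`-good pair: it achieves the maximal step count `s(n)`. -/
def isGoodPair (n : ℤ) (b a : ℤ) : Prop :=
  ∃ s : ℕ, isSlow n s ∧ 1 ≤ a ∧ 1 ≤ b ∧
    n = a * (Nat.fib (s - 1) : ℤ) + b * (Nat.fib (s - 2) : ℤ)

lemma fib_cast_add_two (m : ℕ) : ((Nat.fib (m+2) : ℤ)) = Nat.fib (m+1) + Nat.fib m := by
  rw [Nat.fib_add_two]; push_cast; ring

lemma reaches_step {n : ℤ} {m : ℕ} (h : reaches n (m+3)) : reaches n (m+2) := by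
  obtain ⟨x, y, hx, hy, heq⟩ := h
  rw [show m+3-1 = m+2 by omega, show m+3-2 = m+1 by omega] at heq
  refine ⟨x + y, x, by linarith, hx, ?_⟩
  rw [show m+2-1 = m+1 by omega, show m+2-2 = m by omega, heq, fib_cast_add_two m]
  ring

lemma fib_cop (m : ℕ) : IsCoprime ((Nat.fib (m+2) : ℤ)) ((Nat.fib (m+1) : ℤ)) := by
  rw [Nat.isCoprime_iff_coprime]
  exact (Nat.fib_coprime_fib_succ (m+1)).symm

lemma slow_main (n a b : ℤ) (m : ℕ) (ha : 1 ≤ a) (hab : a ≤ b)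
    (hb : b ≤ (Nat.fib (m+2) : ℤ))
    (hdec : n = a * (Nat.fib (m+2) : ℤ) + b * (Nat.fib (m+1) : ℤ)) :
    isSlow n (m+3) := by
  constructor
  · exact ⟨a, b, ha, le_trans ha hab, by
      rw [show m+3-1 = m+2 by omega, show m+3-2 = m+1 by omega]; exact hdec⟩
  · intro s' hs'
    by_contra hlt
    push_neg at hlt
    have hreach : reaches n (m+4) := by
      obtain ⟨j, hj⟩ : ∃ j, s' = m + 4 + j := ⟨s' - (m+4), by omega⟩
      subst hj
      clear hlt
      induction j with
      | zero => exact hs'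
      | succ k ih =>
        rw [show m + 4 + (k+1) = (m + k + 2) + 3 by omega] at hs'
        have h2 := reaches_step hs'
        rw [show m + k + 2 + 2 = m + 4 + k by omega] at h2
        exact ih h2
    obtain ⟨x, y, hx, hy, heq⟩ := hreach
    rw [show m+4-1 = m+3 by omega, show m+4-2 = m+2 by omega] at heq
    set F1 : ℤ := (Nat.fib (m+1) : ℤ) with hF1def
    set F2 : ℤ := (Nat.fib (m+2) : ℤ) with hF2def
    have hF3 : (Nat.fib (m+3) : ℤ) = F2 + F1 := fib_cast_add_two (m+1)
    have hF1pos : (0:ℤ) < F1 := by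
      rw [hF1def]; exact_mod_cast Nat.fib_pos.mpr (by omega)
    have hF2pos : (0:ℤ) < F2 := by
      rw [hF2def]; exact_mod_cast Nat.fib_pos.mpr (by omega)
    have hcop : IsCoprime F2 F1 := fib_cop m
    have key : F2 * (a - x - y) = F1 * (x - b) := by
      rw [hF3] at heq
      linear_combination heq - hdec
    have hdvd : F2 ∣ (x - b) := hcop.dvd_of_dvd_mul_left ⟨a - x - y, key.symm⟩
    obtain ⟨k, hk⟩ := hdvd
    have hy2 : a - x - y = F1 * k := by
      apply mul_left_cancel₀ (ne_of_gt hF2pos)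
      rw [key, hk]; ring
    have hkneg : k ≤ -1 := by
      by_contra h
      push_neg at h
      have hk0 : 0 ≤ k := by omega
      nlinarith [mul_nonneg (le_of_lt hF1pos) hk0, mul_nonneg (le_of_lt hF2pos) hk0]
    have : F2 * k ≤ F2 * (-1) := by
      exact mul_le_mul_of_nonneg_left hkneg (le_of_lt hF2pos)
    linarith

lemma slow_unique {n : ℤ} {s s' : ℕ} (h : isSlow n s) (h' : isSlow n s') : s = s' :=
  le_antisymm (h'.2 s h.1) (h.2 s' h'.1)

lemma good_char (n a b : ℤ) (m : ℕ) (ha : 1 ≤ a) (hab : a ≤ b)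
    (hb : b ≤ (Nat.fib (m+2) : ℤ))
    (hdec : n = a * (Nat.fib (m+2) : ℤ) + b * (Nat.fib (m+1) : ℤ)) (b' a' : ℤ) :
    isGoodPair n b' a' ↔
      ((b' = b ∧ a' = a) ∨
       (b' = b + (Nat.fib (m+2) : ℤ) ∧ a' = a - (Nat.fib (m+1) : ℤ) ∧
        (Nat.fib (m+1) : ℤ) < a)) := by
  have hslow := slow_main n a b m ha hab hb hdec
  set F1 : ℤ := (Nat.fib (m+1) : ℤ) with hF1def
  set F2 : ℤ := (Nat.fib (m+2) : ℤ) with hF2def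
  have hF1pos : (0:ℤ) < F1 := by
    rw [hF1def]; exact_mod_cast Nat.fib_pos.mpr (by omega)
  have hF2pos : (0:ℤ) < F2 := by
    rw [hF2def]; exact_mod_cast Nat.fib_pos.mpr (by omega)
  have hm : (Nat.fib m : ℤ) ≤ F1 := by
    rw [hF1def]; exact_mod_cast Nat.fib_le_fib_succ
  have hF2e : F2 = F1 + (Nat.fib m : ℤ) := fib_cast_add_two m
  constructor
  · rintro ⟨s, hs, ha', hb', heq⟩
    have hseq : s = m + 3 := slow_unique hs hslow
    subst hseq
    rw [show m+3-1 = m+2 by omega, show m+3-2 = m+1 by omega] at heq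
    have hcop : IsCoprime F2 F1 := fib_cop m
    have key : F2 * (a' - a) = F1 * (b - b') := by
      linear_combination hdec - heq
    have hdvd : F1 ∣ (a' - a) := by
      apply hcop.symm.dvd_of_dvd_mul_left
      exact ⟨b - b', by linear_combination key⟩
    obtain ⟨c, hc⟩ := hdvd
    have hbb : b - b' = F2 * c := by
      apply mul_left_cancel₀ (ne_of_gt hF1pos)
      have : F1 * (b - b') = F2 * (F1 * c) := by rw [← hc, ← key]
      rw [this]; ring
    have hc1 : c ≤ 0 := by
      by_contra h
      push_neg at h
      have : F2 * 1 ≤ F2 * c := mul_le_mul_of_nonneg_left h (le_of_lt hF2pos)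
      linarith
    have hc2 : -1 ≤ c := by
      by_contra h
      push_neg at h
      have hc2' : c ≤ -2 := by omega
      have : F1 * c ≤ F1 * (-2) := mul_le_mul_of_nonneg_left hc2' (le_of_lt hF1pos)
      linarith
    interval_cases c
    · right
      refine ⟨by linarith, by linarith, by linarith⟩
    · left
      constructor <;> linarith
  · rintro (⟨hb'', ha''⟩ | ⟨hb'', ha'', hlt⟩)
    · subst hb''; subst ha''
      exact ⟨m+3, hslow, ha, le_trans ha hab, by
        rw [show m+3-1 = m+2 by omega, show m+3-2 = m+1 by omega]; exact hdec⟩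
    · subst hb''; subst ha''
      refine ⟨m+3, hslow, by linarith, by linarith, ?_⟩
      rw [show m+3-1 = m+2 by omega, show m+3-2 = m+1 by omega]
      linear_combination hdec

theorem stmt10 (n : ℤ) (hn : 2 ≤ n) (a b : ℤ) (t : ℕ) (ht : 2 ≤ t)
    (ha : 1 ≤ a) (hab : a ≤ b) (hb : b ≤ (Nat.fib t : ℤ))
    (hdec : n = a * (Nat.fib t : ℤ) + b * (Nat.fib (t - 1) : ℤ)) :
    ((∃ p q : ℤ × ℤ, p ≠ q ∧
        (∀ r : ℤ × ℤ, isGoodPair n r.1 r.2 ↔ r = p ∨ r = q)) ↔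
      (Nat.fib (t - 1) : ℤ) < a) ∧
    ((Nat.fib (t - 1) : ℤ) < a →
      ∀ r : ℤ × ℤ, isGoodPair n r.1 r.2 ↔
        r = (b, a) ∨ r = (b + (Nat.fib t : ℤ), a - (Nat.fib (t - 1) : ℤ))) := by
  obtain ⟨m, rfl⟩ : ∃ m, t = m + 2 := ⟨t - 2, by omega⟩
  rw [show m+2-1 = m+1 by omega] at hdec ⊢
  have char := good_char n a b m ha hab hb hdec
  have hF2pos : (0:ℤ) < (Nat.fib (m+2) : ℤ) := by
    exact_mod_cast Nat.fib_pos.mpr (by omega)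
  have part2 : (Nat.fib (m+1) : ℤ) < a →
      ∀ r : ℤ × ℤ, isGoodPair n r.1 r.2 ↔
        r = (b, a) ∨ r = (b + (Nat.fib (m+2) : ℤ), a - (Nat.fib (m+1) : ℤ)) := by
    intro hlt r
    rw [char r.1 r.2]
    constructor
    · rintro (⟨h1, h2⟩ | ⟨h1, h2, _⟩)
      · left; exact Prod.ext h1 h2
      · right; exact Prod.ext h1 h2
    · rintro (rfl | rfl)
      · left; exact ⟨rfl, rfl⟩
      · right; exact ⟨rfl, rfl, hlt⟩
  refine ⟨⟨?_, ?_⟩, part2⟩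
  · rintro ⟨p, q, hpq, hall⟩
    by_contra hle
    push_neg at hle
    have hp : p = (b, a) := by
      have := (char p.1 p.2).mp ((hall p).mpr (Or.inl rfl))
      rcases this with ⟨h1, h2⟩ | ⟨_, _, h3⟩
      · exact Prod.ext h1 h2
      · linarith
    have hq : q = (b, a) := by
      have := (char q.1 q.2).mp ((hall q).mpr (Or.inr rfl))
      rcases this with ⟨h1, h2⟩ | ⟨_, _, h3⟩
      · exact Prod.ext h1 h2
      · linarith
    exact hpq (hp.trans hq.symm)
  · intro hlt
    refine ⟨(b, a), (b + (Nat.fib (m+2) : ℤ), a - (Nat.fib (m+1) : ℤ)), ?_, part2 hlt⟩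
    intro h
    have := congrArg Prod.fst h
    simp only at this
    linarith
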